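/- For any real numbers c < d and any function f : [c,d] → ℝ such that ∫_c^d (y-c)(d-y)|f'(y)|² dy < ∞, one has ∫_c^d |f(y) - (1/(d-c))∫_c^d f(z) dz|² dy ≤ (1/2) ∫_c^d (y-c)(d-y)|f'(y)|² dy. -/

import Mathlib

open MeasureTheory Set

/-- Cauchy–Schwarz on an interval: `(∫ g)² ≤ (b-a) ∫ g²`. -/
lemma sq_setIntegral_le_aux (a b : ℝ) (hab : a ≤ b) (g : ℝ → ℝ)
    (hg : IntegrableOn g (Set.Ioo a b)) (hg2 : IntegrableOn (fun t => g t ^ 2) (Set.Ioo a b)) :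
    (∫ t in Set.Ioo a b, g t) ^ 2 ≤ (b - a) * ∫ t in Set.Ioo a b, g t ^ 2 := by
  rcases eq_or_lt_of_le hab with rfl | hab'
  · simp
  set S := ∫ t in Set.Ioo a b, g t with hS
  have hL : (0:ℝ) < b - a := sub_pos.2 hab'
  have key : 0 ≤ ∫ t in Set.Ioo a b, ((b - a) * g t - S) ^ 2 :=
    integral_nonneg fun t => sq_nonneg _
  have expand : ∫ t in Set.Ioo a b, ((b - a) * g t - S) ^ 2
      = (b - a) ^ 2 * (∫ t in Set.Ioo a b, g t ^ 2) - 2 * (b - a) * S * S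
        + S ^ 2 * (b - a) := by
    have h1 : ∀ t, ((b - a) * g t - S) ^ 2
        = (b - a) ^ 2 * g t ^ 2 - (2 * (b - a) * S) * g t + S ^ 2 := fun t => by ring
    rw [show (fun t => ((b - a) * g t - S) ^ 2)
        = fun t => (b - a) ^ 2 * g t ^ 2 - (2 * (b - a) * S) * g t + S ^ 2 from funext h1]
    have i3 : Integrable (fun t => (b - a) ^ 2 * g t ^ 2) (volume.restrict (Set.Ioo a b)) :=
      hg2.const_mul _
    have i4 : Integrable (fun t => (2 * (b - a) * S) * g t) (volume.restrict (Set.Ioo a b)) :=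
      hg.const_mul _
    have i1 : Integrable (fun t => (b - a) ^ 2 * g t ^ 2 - (2 * (b - a) * S) * g t)
        (volume.restrict (Set.Ioo a b)) := i3.sub i4
    have i2 : Integrable (fun _ : ℝ => S ^ 2) (volume.restrict (Set.Ioo a b)) :=
      integrableOn_const measure_Ioo_lt_top.ne
    rw [integral_add i1 i2, integral_sub i3 i4, integral_const_mul, integral_const_mul,
      setIntegral_const, Real.volume_real_Ioo_of_le hab, smul_eq_mul]
    ring
  nlinarith [sq_nonneg S, key, expand]

/-- Tonelli/Fubini computation for the right half triangle. -/
lemma fubini_aux_right (a b : ℝ) (hab : a < b) (h : ℝ → ℝ) (hm : Measurable h)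
    (h0 : ∀ t, 0 ≤ h t) (hint : IntegrableOn (fun t => (b - t) * h t) (Set.Ioo a b)) :
    IntegrableOn (fun y => (y - a) * ∫ t in Set.Ioo a y, h t) (Set.Ioo a b) ∧
    ∫ y in Set.Ioo a b, (y - a) * ∫ t in Set.Ioo a y, h t
      = ∫ t in Set.Ioo a b, ((b - a) ^ 2 - (t - a) ^ 2) / 2 * h t := by
  classical
  set μ : Measure ℝ := volume.restrict (Set.Ioo a b) with hμ
  set F : ℝ → ℝ → ℝ := fun y t => if t < y then (y - a) * h t else 0 with hF
  have hFm : Measurable (Function.uncurry F) := by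
    apply Measurable.ite (measurableSet_lt measurable_snd measurable_fst)
    · exact ((measurable_fst.sub measurable_const).mul (hm.comp measurable_snd))
    · exact measurable_const
  have hFsm : StronglyMeasurable (Function.uncurry F) := hFm.stronglyMeasurable
  -- sections in t (for fixed y)
  have sect1 : ∀ y ∈ Set.Ioo a b, ∫ t, F y t ∂μ = (y - a) * ∫ t in Set.Ioo a y, h t := by
    intro y hy
    have hFy : F y = (Set.Iio y).indicator (fun t => (y - a) * h t) := by
      funext t; simp [hF, Set.indicator_apply]
    rw [hFy, integral_indicator measurableSet_Iio, hμ,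
      Measure.restrict_restrict measurableSet_Iio]
    have hset : Set.Iio y ∩ Set.Ioo a b = Set.Ioo a y := by
      ext t
      simp only [Set.mem_inter_iff, Set.mem_Iio, Set.mem_Ioo]
      constructor
      · rintro ⟨h1, h2, _⟩; exact ⟨h2, h1⟩
      · rintro ⟨h1, h2⟩; exact ⟨h2, h1, h2.trans hy.2⟩
    rw [hset, integral_const_mul]
  -- sections in y (for fixed t)
  have sect2 : ∀ t ∈ Set.Ioo a b, ∫ y, F y t ∂μ
      = ((b - a) ^ 2 - (t - a) ^ 2) / 2 * h t := by
    intro t ht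
    have hFt : (fun y => F y t) = (Set.Ioi t).indicator (fun y => (y - a) * h t) := by
      funext y; simp [hF, Set.indicator_apply]
    rw [hFt, integral_indicator measurableSet_Ioi, hμ,
      Measure.restrict_restrict measurableSet_Ioi]
    have hset : Set.Ioi t ∩ Set.Ioo a b = Set.Ioo t b := by
      ext y
      simp only [Set.mem_inter_iff, Set.mem_Ioi, Set.mem_Ioo]
      constructor
      · rintro ⟨h1, _, h3⟩; exact ⟨h1, h3⟩
      · rintro ⟨h1, h2⟩; exact ⟨h1, ht.1.trans h1, h2⟩
    have hK : ∫ y in Set.Ioo t b, (y - a) = ((b - a) ^ 2 - (t - a) ^ 2) / 2 := by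
      rw [← MeasureTheory.integral_Ioc_eq_integral_Ioo,
        ← intervalIntegral.integral_of_le ht.2.le]
      rw [intervalIntegral.integral_comp_sub_right (fun y => y) a, integral_id]
    rw [hset, integral_mul_const, hK]
  -- integrability of F on the product
  have hsects : ∀ᵐ t ∂μ, Integrable (fun y => F y t) μ := by
    refine Filter.Eventually.of_forall fun t => ?_
    have hcont : Integrable (fun y => (y - a) * h t) μ := by
      have : IntegrableOn (fun y : ℝ => (y - a) * h t) (Set.Icc a b) :=
        ((continuous_id.sub continuous_const).mul continuous_const).integrableOn_Icc
      exact this.mono_set Set.Ioo_subset_Icc_self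
    have : (fun y => F y t) = (Set.Ioi t).indicator (fun y => (y - a) * h t) := by
      funext y; simp [hF, Set.indicator_apply]
    rw [this]
    exact hcont.indicator measurableSet_Ioi
  have hnorm : Integrable (fun t => ∫ y, ‖F y t‖ ∂μ) μ := by
    apply Integrable.mono' (g := fun t => (b - a) * ((b - t) * h t)) (hint.const_mul (b - a))
    · exact ((hFsm.norm).integral_prod_left' (μ := μ)).aestronglyMeasurable
    · filter_upwards [ae_restrict_mem measurableSet_Ioo] with t ht
      have habs : ∫ y, ‖F y t‖ ∂μ = ∫ y, F y t ∂μ := by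
        apply integral_congr_ae
        filter_upwards [ae_restrict_mem measurableSet_Ioo] with y hy
        have : 0 ≤ F y t := by
          by_cases hty : t < y
          · simp only [hF, if_pos hty]
            exact mul_nonneg (by linarith [hy.1]) (h0 t)
          · simp [hF, if_neg hty]
        exact Real.norm_of_nonneg this
      have hnn : 0 ≤ ∫ y, ‖F y t‖ ∂μ := integral_nonneg fun y => norm_nonneg _
      rw [Real.norm_of_nonneg hnn, habs, sect2 t ht]
      have e1 : (0:ℝ) ≤ b - t := by linarith [ht.2]
      nlinarith [mul_nonneg (mul_nonneg e1 e1) (h0 t), ht.1, ht.2, h0 t]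
  have hFi : Integrable (Function.uncurry F) (μ.prod μ) :=
    (integrable_prod_iff' hFsm.aestronglyMeasurable).2 ⟨hsects, hnorm⟩
  constructor
  · have h1 : Integrable (fun y => ∫ t, F y t ∂μ) μ := hFi.integral_prod_left
    apply h1.congr
    filter_upwards [ae_restrict_mem measurableSet_Ioo] with y hy
    exact sect1 y hy
  · have hswap := MeasureTheory.integral_integral_swap hFi
    have hL : ∫ y, ∫ t, F y t ∂μ ∂μ = ∫ y in Set.Ioo a b, (y - a) * ∫ t in Set.Ioo a y, h t := by
      apply integral_congr_ae
      filter_upwards [ae_restrict_mem measurableSet_Ioo] with y hy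
      exact sect1 y hy
    have hR : ∫ t, ∫ y, F y t ∂μ ∂μ
        = ∫ t in Set.Ioo a b, ((b - a) ^ 2 - (t - a) ^ 2) / 2 * h t := by
      apply integral_congr_ae
      filter_upwards [ae_restrict_mem measurableSet_Ioo] with t ht
      exact sect2 t ht
    rw [← hL, hswap, hR]

/-- Tonelli/Fubini computation for the left half triangle. -/
lemma fubini_aux_left (a b : ℝ) (hab : a < b) (h : ℝ → ℝ) (hm : Measurable h)
    (h0 : ∀ t, 0 ≤ h t) (hint : IntegrableOn (fun t => (t - a) * h t) (Set.Ioo a b)) :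
    IntegrableOn (fun y => (b - y) * ∫ t in Set.Ioo y b, h t) (Set.Ioo a b) ∧
    ∫ y in Set.Ioo a b, (b - y) * ∫ t in Set.Ioo y b, h t
      = ∫ t in Set.Ioo a b, ((b - a) ^ 2 - (b - t) ^ 2) / 2 * h t := by
  classical
  set μ : Measure ℝ := volume.restrict (Set.Ioo a b) with hμ
  set F : ℝ → ℝ → ℝ := fun y t => if y < t then (b - y) * h t else 0 with hF
  have hFm : Measurable (Function.uncurry F) := by
    apply Measurable.ite (measurableSet_lt measurable_fst measurable_snd)
    · exact ((measurable_const.sub measurable_fst).mul (hm.comp measurable_snd))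
    · exact measurable_const
  have hFsm : StronglyMeasurable (Function.uncurry F) := hFm.stronglyMeasurable
  have sect1 : ∀ y ∈ Set.Ioo a b, ∫ t, F y t ∂μ = (b - y) * ∫ t in Set.Ioo y b, h t := by
    intro y hy
    have hFy : F y = (Set.Ioi y).indicator (fun t => (b - y) * h t) := by
      funext t; simp [hF, Set.indicator_apply]
    rw [hFy, integral_indicator measurableSet_Ioi, hμ,
      Measure.restrict_restrict measurableSet_Ioi]
    have hset : Set.Ioi y ∩ Set.Ioo a b = Set.Ioo y b := by
      ext t
      simp only [Set.mem_inter_iff, Set.mem_Ioi, Set.mem_Ioo]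
      constructor
      · rintro ⟨h1, _, h3⟩; exact ⟨h1, h3⟩
      · rintro ⟨h1, h2⟩; exact ⟨h1, hy.1.trans h1, h2⟩
    rw [hset, integral_const_mul]
  have sect2 : ∀ t ∈ Set.Ioo a b, ∫ y, F y t ∂μ
      = ((b - a) ^ 2 - (b - t) ^ 2) / 2 * h t := by
    intro t ht
    have hFt : (fun y => F y t) = (Set.Iio t).indicator (fun y => (b - y) * h t) := by
      funext y; simp [hF, Set.indicator_apply]
    rw [hFt, integral_indicator measurableSet_Iio, hμ,
      Measure.restrict_restrict measurableSet_Iio]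
    have hset : Set.Iio t ∩ Set.Ioo a b = Set.Ioo a t := by
      ext y
      simp only [Set.mem_inter_iff, Set.mem_Iio, Set.mem_Ioo]
      constructor
      · rintro ⟨h1, h2, _⟩; exact ⟨h2, h1⟩
      · rintro ⟨h1, h2⟩; exact ⟨h2, h1, h2.trans ht.2⟩
    have hK : ∫ y in Set.Ioo a t, (b - y) = ((b - a) ^ 2 - (b - t) ^ 2) / 2 := by
      rw [← MeasureTheory.integral_Ioc_eq_integral_Ioo,
        ← intervalIntegral.integral_of_le ht.1.le]
      have : ∫ y in a..t, (b - y) = ∫ y in a..t, (b - y) := rfl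
      rw [show (fun y : ℝ => b - y) = (fun y : ℝ => -(y - b)) from funext fun y => by ring]
      rw [intervalIntegral.integral_neg, intervalIntegral.integral_comp_sub_right (fun y => y) b,
        integral_id]
      ring
    rw [hset, integral_mul_const, hK]
  have hsects : ∀ᵐ t ∂μ, Integrable (fun y => F y t) μ := by
    refine Filter.Eventually.of_forall fun t => ?_
    have hcont : Integrable (fun y => (b - y) * h t) μ := by
      have : IntegrableOn (fun y : ℝ => (b - y) * h t) (Set.Icc a b) :=
        ((continuous_const.sub continuous_id).mul continuous_const).integrableOn_Icc
      exact this.mono_set Set.Ioo_subset_Icc_self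
    have : (fun y => F y t) = (Set.Iio t).indicator (fun y => (b - y) * h t) := by
      funext y; simp [hF, Set.indicator_apply]
    rw [this]
    exact hcont.indicator measurableSet_Iio
  have hnorm : Integrable (fun t => ∫ y, ‖F y t‖ ∂μ) μ := by
    apply Integrable.mono' (g := fun t => (b - a) * ((t - a) * h t)) (hint.const_mul (b - a))
    · exact ((hFsm.norm).integral_prod_left' (μ := μ)).aestronglyMeasurable
    · filter_upwards [ae_restrict_mem measurableSet_Ioo] with t ht
      have habs : ∫ y, ‖F y t‖ ∂μ = ∫ y, F y t ∂μ := by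
        apply integral_congr_ae
        filter_upwards [ae_restrict_mem measurableSet_Ioo] with y hy
        have : 0 ≤ F y t := by
          by_cases hty : y < t
          · simp only [hF, if_pos hty]
            exact mul_nonneg (by linarith [hy.2]) (h0 t)
          · simp [hF, if_neg hty]
        exact Real.norm_of_nonneg this
      have hnn : 0 ≤ ∫ y, ‖F y t‖ ∂μ := integral_nonneg fun y => norm_nonneg _
      rw [Real.norm_of_nonneg hnn, habs, sect2 t ht]
      have e1 : (0:ℝ) ≤ t - a := by linarith [ht.1]
      nlinarith [mul_nonneg (mul_nonneg e1 e1) (h0 t), ht.1, ht.2, h0 t]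
  have hFi : Integrable (Function.uncurry F) (μ.prod μ) :=
    (integrable_prod_iff' hFsm.aestronglyMeasurable).2 ⟨hsects, hnorm⟩
  constructor
  · have h1 : Integrable (fun y => ∫ t, F y t ∂μ) μ := hFi.integral_prod_left
    apply h1.congr
    filter_upwards [ae_restrict_mem measurableSet_Ioo] with y hy
    exact sect1 y hy
  · have hswap := MeasureTheory.integral_integral_swap hFi
    have hL : ∫ y, ∫ t, F y t ∂μ ∂μ = ∫ y in Set.Ioo a b, (b - y) * ∫ t in Set.Ioo y b, h t := by
      apply integral_congr_ae
      filter_upwards [ae_restrict_mem measurableSet_Ioo] with y hy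
      exact sect1 y hy
    have hR : ∫ t, ∫ y, F y t ∂μ ∂μ
        = ∫ t in Set.Ioo a b, ((b - a) ^ 2 - (b - t) ^ 2) / 2 * h t := by
      apply integral_congr_ae
      filter_upwards [ae_restrict_mem measurableSet_Ioo] with t ht
      exact sect2 t ht
    rw [← hL, hswap, hR]

set_option maxHeartbeats 2000000 in
/-- Poincaré-type inequality with constant 1/2 independent of the interval length. -/
theorem poincare_type_inequality (c d : ℝ) (hcd : c < d) (f : ℝ → ℝ)
    (hf : ∀ y ∈ Set.Icc c d, DifferentiableAt ℝ f y)
    (hfin : IntegrableOn (fun y => (y - c) * (d - y) * (deriv f y) ^ 2) (Set.Ioo c d)) :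
    ∫ y in c..d, |f y - (1 / (d - c)) * ∫ z in c..d, f z| ^ 2
      ≤ (1 / 2) * ∫ y in c..d, (y - c) * (d - y) * (deriv f y) ^ 2 := by
  set y₀ : ℝ := (c + d) / 2 with hy₀
  have hcy₀ : c < y₀ := by rw [hy₀]; linarith
  have hy₀d : y₀ < d := by rw [hy₀]; linarith
  have hgm : Measurable (deriv f) := measurable_deriv f
  have hg2m : Measurable fun t => deriv f t ^ 2 := hgm.pow_const 2
  -- continuity of f on [c, d]
  have hfc : ContinuousOn f (Set.Icc c d) := fun y hy => (hf y hy).continuousAt.continuousWithinAt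
  -- integrability of g^2 on compact subintervals
  have hg2int : ∀ a' b', c < a' → b' < d → IntegrableOn (fun t => deriv f t ^ 2) (Set.Icc a' b') := by
    intro a' b' ha hb
    set δ : ℝ := (a' - c) * (d - b') with hδ
    have hδpos : 0 < δ := mul_pos (by linarith) (by linarith)
    have hsub : Set.Icc a' b' ⊆ Set.Ioo c d := fun t ht => ⟨lt_of_lt_of_le ha ht.1,
      lt_of_le_of_lt ht.2 hb⟩
    apply Integrable.mono' (g := fun t => (1 / δ) * ((t - c) * (d - t) * deriv f t ^ 2))
      ((hfin.mono_set hsub).const_mul (1 / δ))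
    · exact hg2m.aestronglyMeasurable
    · filter_upwards [ae_restrict_mem measurableSet_Icc] with t ht
      have h1 : a' ≤ t := ht.1
      have h2 : t ≤ b' := ht.2
      have hw : δ ≤ (t - c) * (d - t) := by nlinarith
      rw [Real.norm_of_nonneg (sq_nonneg _)]
      rw [one_div, inv_mul_eq_div, le_div_iff₀ hδpos]
      nlinarith [sq_nonneg (deriv f t)]
  have hgint : ∀ a' b', c < a' → b' < d → IntegrableOn (deriv f) (Set.Icc a' b') := by
    intro a' b' ha hb
    have hconst : IntegrableOn (fun _ : ℝ => (1:ℝ)) (Set.Icc a' b') :=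
      integrableOn_const measure_Icc_lt_top.ne
    have hsum0 : IntegrableOn (fun t => deriv f t ^ 2 + 1) (Set.Icc a' b') :=
      (hg2int a' b' ha hb).add hconst
    have hsum : IntegrableOn (fun t => (deriv f t ^ 2 + 1) / 2) (Set.Icc a' b') :=
      hsum0.div_const 2
    refine Integrable.mono' hsum hgm.aestronglyMeasurable ?_
    filter_upwards with t
    rw [Real.norm_eq_abs]
    nlinarith [sq_nonneg (|deriv f t| - 1), sq_abs (deriv f t), abs_nonneg (deriv f t)]
  -- the key pointwise bound, right half
  have ptwise_right : ∀ y ∈ Set.Ioo y₀ d,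
      (f y - f y₀) ^ 2 ≤ (y - y₀) * ∫ t in Set.Ioo y₀ y, deriv f t ^ 2 := by
    intro y hy
    have hy1 : y₀ < y := hy.1
    have hy2 : y < d := hy.2
    have hsubIcc : Set.Icc y₀ y ⊆ Set.Icc c d := Set.Icc_subset_Icc hcy₀.le hy2.le
    have hder : ∀ x ∈ Set.uIcc y₀ y, DifferentiableAt ℝ f x := by
      intro x hx
      rw [Set.uIcc_of_le hy1.le] at hx
      exact hf x (hsubIcc hx)
    have hii : IntervalIntegrable (deriv f) volume y₀ y := by
      apply IntegrableOn.intervalIntegrable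
      rw [Set.uIcc_of_le hy1.le]
      exact hgint y₀ y hcy₀ hy2
    have hftc : ∫ t in y₀..y, deriv f t = f y - f y₀ :=
      intervalIntegral.integral_deriv_eq_sub hder hii
    have hIoo : ∫ t in y₀..y, deriv f t = ∫ t in Set.Ioo y₀ y, deriv f t := by
      rw [intervalIntegral.integral_of_le hy1.le, MeasureTheory.integral_Ioc_eq_integral_Ioo]
    rw [← hftc, hIoo]
    exact sq_setIntegral_le_aux y₀ y hy1.le (deriv f)
      ((hgint y₀ y hcy₀ hy2).mono_set Set.Ioo_subset_Icc_self)
      ((hg2int y₀ y hcy₀ hy2).mono_set Set.Ioo_subset_Icc_self)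
  -- the key pointwise bound, left half
  have ptwise_left : ∀ y ∈ Set.Ioo c y₀,
      (f y - f y₀) ^ 2 ≤ (y₀ - y) * ∫ t in Set.Ioo y y₀, deriv f t ^ 2 := by
    intro y hy
    have hy1 : c < y := hy.1
    have hy2 : y < y₀ := hy.2
    have hsubIcc : Set.Icc y y₀ ⊆ Set.Icc c d := Set.Icc_subset_Icc hy1.le hy₀d.le
    have hder : ∀ x ∈ Set.uIcc y y₀, DifferentiableAt ℝ f x := by
      intro x hx
      rw [Set.uIcc_of_le hy2.le] at hx
      exact hf x (hsubIcc hx)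
    have hii : IntervalIntegrable (deriv f) volume y y₀ := by
      apply IntegrableOn.intervalIntegrable
      rw [Set.uIcc_of_le hy2.le]
      exact hgint y y₀ hy1 hy₀d
    have hftc : ∫ t in y..y₀, deriv f t = f y₀ - f y :=
      intervalIntegral.integral_deriv_eq_sub hder hii
    have hIoo : ∫ t in y..y₀, deriv f t = ∫ t in Set.Ioo y y₀, deriv f t := by
      rw [intervalIntegral.integral_of_le hy2.le, MeasureTheory.integral_Ioc_eq_integral_Ioo]
    have : (f y - f y₀) ^ 2 = (∫ t in Set.Ioo y y₀, deriv f t) ^ 2 := by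
      rw [← hIoo, hftc]; ring
    rw [this]
    exact sq_setIntegral_le_aux y y₀ hy2.le (deriv f)
      ((hgint y y₀ hy1 hy₀d).mono_set Set.Ioo_subset_Icc_self)
      ((hg2int y y₀ hy1 hy₀d).mono_set Set.Ioo_subset_Icc_self)
  -- Fubini on right half
  have hint_r : IntegrableOn (fun t => (d - t) * deriv f t ^ 2) (Set.Ioo y₀ d) := by
    have hsub : Set.Ioo y₀ d ⊆ Set.Ioo c d := Set.Ioo_subset_Ioo hcy₀.le le_rfl
    apply Integrable.mono' (g := fun t => (1 / (y₀ - c)) * ((t - c) * (d - t) * deriv f t ^ 2))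
      ((hfin.mono_set hsub).const_mul _)
    · exact ((measurable_const.sub measurable_id).mul hg2m).aestronglyMeasurable
    · filter_upwards [ae_restrict_mem measurableSet_Ioo] with t ht
      have h1 : y₀ < t := ht.1
      have h2 : t < d := ht.2
      rw [Real.norm_of_nonneg (mul_nonneg (by linarith) (sq_nonneg _))]
      rw [one_div, inv_mul_eq_div, le_div_iff₀ (by linarith : (0:ℝ) < y₀ - c)]
      nlinarith [mul_nonneg (mul_nonneg (by linarith : (0:ℝ) ≤ d - t) (sq_nonneg (deriv f t)))
        (by linarith : (0:ℝ) ≤ t - y₀)]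
  have fub_r := fubini_aux_right y₀ d hy₀d (fun t => deriv f t ^ 2) hg2m (fun t => sq_nonneg _) hint_r
  -- Fubini on left half
  have hint_l : IntegrableOn (fun t => (t - c) * deriv f t ^ 2) (Set.Ioo c y₀) := by
    have hsub : Set.Ioo c y₀ ⊆ Set.Ioo c d := Set.Ioo_subset_Ioo le_rfl hy₀d.le
    apply Integrable.mono' (g := fun t => (1 / (d - y₀)) * ((t - c) * (d - t) * deriv f t ^ 2))
      ((hfin.mono_set hsub).const_mul _)
    · exact ((measurable_id.sub measurable_const).mul hg2m).aestronglyMeasurable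
    · filter_upwards [ae_restrict_mem measurableSet_Ioo] with t ht
      have h1 : c < t := ht.1
      have h2 : t < y₀ := ht.2
      rw [Real.norm_of_nonneg (mul_nonneg (by linarith) (sq_nonneg _))]
      rw [one_div, inv_mul_eq_div, le_div_iff₀ (by linarith : (0:ℝ) < d - y₀)]
      nlinarith [mul_nonneg (mul_nonneg (by linarith : (0:ℝ) ≤ t - c) (sq_nonneg (deriv f t)))
        (by linarith : (0:ℝ) ≤ y₀ - t)]
  have fub_l := fubini_aux_left c y₀ hcy₀ (fun t => deriv f t ^ 2) hg2m (fun t => sq_nonneg _) hint_l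
  -- weight integrand integrability
  have hw_half_r : IntegrableOn (fun t => (1/2) * ((t - c) * (d - t) * deriv f t ^ 2))
      (Set.Ioo y₀ d) := (hfin.mono_set (Set.Ioo_subset_Ioo hcy₀.le le_rfl)).const_mul _
  have hw_half_l : IntegrableOn (fun t => (1/2) * ((t - c) * (d - t) * deriv f t ^ 2))
      (Set.Ioo c y₀) := (hfin.mono_set (Set.Ioo_subset_Ioo le_rfl hy₀d.le)).const_mul _
  -- half estimates
  have half_r : ∫ y in Set.Ioo y₀ d, (f y - f y₀) ^ 2
      ≤ ∫ t in Set.Ioo y₀ d, (1/2) * ((t - c) * (d - t) * deriv f t ^ 2) := by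
    have step1 : ∫ y in Set.Ioo y₀ d, (f y - f y₀) ^ 2
        ≤ ∫ y in Set.Ioo y₀ d, (y - y₀) * ∫ t in Set.Ioo y₀ y, deriv f t ^ 2 := by
      apply setIntegral_mono_on _ fub_r.1 measurableSet_Ioo ptwise_right
      · have : ContinuousOn (fun y => (f y - f y₀) ^ 2) (Set.Icc y₀ d) := by
          apply ContinuousOn.pow
          exact ContinuousOn.sub (hfc.mono (Set.Icc_subset_Icc hcy₀.le le_rfl)) continuousOn_const
        exact (this.integrableOn_Icc).mono_set Set.Ioo_subset_Icc_self
    have step2 : ∫ y in Set.Ioo y₀ d, (y - y₀) * ∫ t in Set.Ioo y₀ y, deriv f t ^ 2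
        = ∫ t in Set.Ioo y₀ d, (1/2) * ((t - c) * (d - t) * deriv f t ^ 2) := by
      rw [fub_r.2]
      apply setIntegral_congr_fun measurableSet_Ioo
      intro t _
      have : y₀ = (c + d) / 2 := hy₀
      rw [this]; ring
    linarith [step1, step2.le, step2.ge]
  have half_l : ∫ y in Set.Ioo c y₀, (f y - f y₀) ^ 2
      ≤ ∫ t in Set.Ioo c y₀, (1/2) * ((t - c) * (d - t) * deriv f t ^ 2) := by
    have step1 : ∫ y in Set.Ioo c y₀, (f y - f y₀) ^ 2
        ≤ ∫ y in Set.Ioo c y₀, (y₀ - y) * ∫ t in Set.Ioo y y₀, deriv f t ^ 2 := by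
      apply setIntegral_mono_on _ fub_l.1 measurableSet_Ioo ptwise_left
      · have : ContinuousOn (fun y => (f y - f y₀) ^ 2) (Set.Icc c y₀) := by
          apply ContinuousOn.pow
          exact ContinuousOn.sub (hfc.mono (Set.Icc_subset_Icc le_rfl hy₀d.le)) continuousOn_const
        exact (this.integrableOn_Icc).mono_set Set.Ioo_subset_Icc_self
    have step2 : ∫ y in Set.Ioo c y₀, (y₀ - y) * ∫ t in Set.Ioo y y₀, deriv f t ^ 2
        = ∫ t in Set.Ioo c y₀, (1/2) * ((t - c) * (d - t) * deriv f t ^ 2) := by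
      rw [fub_l.2]
      apply setIntegral_congr_fun measurableSet_Ioo
      intro t _
      have : y₀ = (c + d) / 2 := hy₀
      rw [this]; ring
    linarith [step1, step2.le, step2.ge]
  -- integrability of (f - A)^2 on pieces
  have hfA2 : ∀ A : ℝ, IntegrableOn (fun y => (f y - A) ^ 2) (Set.Ioo c d) := by
    intro A
    have : ContinuousOn (fun y => (f y - A) ^ 2) (Set.Icc c d) :=
      (hfc.sub continuousOn_const).pow 2
    exact (this.integrableOn_Icc).mono_set Set.Ioo_subset_Icc_self
  -- split the middle integral
  have split : ∫ y in Set.Ioo c d, (f y - f y₀) ^ 2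
      = (∫ y in Set.Ioo c y₀, (f y - f y₀) ^ 2) + ∫ y in Set.Ioo y₀ d, (f y - f y₀) ^ 2 := by
    have hunion : Set.Ioo c y₀ ∪ Set.Ico y₀ d = Set.Ioo c d :=
      Set.Ioo_union_Ico_eq_Ioo hcy₀ hy₀d.le
    have hdisj : Disjoint (Set.Ioo c y₀) (Set.Ico y₀ d) := by
      apply Set.disjoint_left.2
      rintro x ⟨_, h1⟩ ⟨h2, _⟩
      exact absurd h1 (not_lt.2 h2)
    rw [← hunion, setIntegral_union hdisj measurableSet_Ico
      ((hfA2 (f y₀)).mono_set (by rw [← hunion]; exact Set.subset_union_left))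
      ((hfA2 (f y₀)).mono_set (by rw [← hunion]; exact Set.subset_union_right)),
      MeasureTheory.integral_Ico_eq_integral_Ioo]
  have join : (∫ t in Set.Ioo c y₀, (1/2) * ((t - c) * (d - t) * deriv f t ^ 2))
      + (∫ t in Set.Ioo y₀ d, (1/2) * ((t - c) * (d - t) * deriv f t ^ 2))
      = ∫ t in Set.Ioo c d, (1/2) * ((t - c) * (d - t) * deriv f t ^ 2) := by
    have hunion : Set.Ioo c y₀ ∪ Set.Ico y₀ d = Set.Ioo c d :=
      Set.Ioo_union_Ico_eq_Ioo hcy₀ hy₀d.le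
    have hdisj : Disjoint (Set.Ioo c y₀) (Set.Ico y₀ d) := by
      apply Set.disjoint_left.2
      rintro x ⟨_, h1⟩ ⟨h2, _⟩
      exact absurd h1 (not_lt.2 h2)
    have hsubIco : Set.Ico y₀ d ⊆ Set.Ioo c d := fun t ht => ⟨lt_of_lt_of_le hcy₀ ht.1, ht.2⟩
    rw [← hunion, setIntegral_union hdisj measurableSet_Ico hw_half_l
      ((hfin.mono_set hsubIco).const_mul _), MeasureTheory.integral_Ico_eq_integral_Ioo]
  -- mean minimization
  set S : ℝ := ∫ y in Set.Ioo c d, f y with hS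
  have hSS : ∫ z in c..d, f z = S := by
    rw [intervalIntegral.integral_of_le hcd.le, MeasureTheory.integral_Ioc_eq_integral_Ioo]
  have hfi : IntegrableOn f (Set.Ioo c d) :=
    (hfc.integrableOn_Icc).mono_set Set.Ioo_subset_Icc_self
  have hf2i : IntegrableOn (fun y => f y ^ 2) (Set.Ioo c d) :=
    ((hfc.pow 2).integrableOn_Icc).mono_set Set.Ioo_subset_Icc_self
  have expand : ∀ q : ℝ, ∫ y in Set.Ioo c d, (f y - q) ^ 2
      = (∫ y in Set.Ioo c d, f y ^ 2) - 2 * q * S + q ^ 2 * (d - c) := by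
    intro q
    have h1 : ∀ y, (f y - q) ^ 2 = f y ^ 2 - (2 * q) * f y + q ^ 2 := fun y => by ring
    rw [show (fun y => (f y - q) ^ 2) = fun y => f y ^ 2 - (2 * q) * f y + q ^ 2 from funext h1]
    have i4 : Integrable (fun y => (2 * q) * f y) (volume.restrict (Set.Ioo c d)) :=
      hfi.const_mul _
    have i1 : Integrable (fun y => f y ^ 2 - (2 * q) * f y) (volume.restrict (Set.Ioo c d)) :=
      hf2i.sub i4
    have i2 : Integrable (fun _ : ℝ => q ^ 2) (volume.restrict (Set.Ioo c d)) :=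
      integrableOn_const measure_Ioo_lt_top.ne
    rw [integral_add i1 i2, integral_sub hf2i i4, integral_const_mul,
      setIntegral_const, Real.volume_real_Ioo_of_le hcd.le,
      smul_eq_mul]
    ring
  have stepA : ∫ y in Set.Ioo c d, (f y - (1 / (d - c)) * S) ^ 2
      ≤ ∫ y in Set.Ioo c d, (f y - f y₀) ^ 2 := by
    rw [expand ((1 / (d - c)) * S), expand (f y₀)]
    have hL : (0:ℝ) < d - c := by linarith
    have hL' : d - c ≠ 0 := ne_of_gt hL
    have e1 : ((1 / (d - c)) * S) ^ 2 * (d - c) - 2 * ((1 / (d - c)) * S) * S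
        = -((1 / (d - c)) * S ^ 2) := by field_simp; ring
    have e2 : (f y₀) ^ 2 * (d - c) - 2 * (f y₀) * S + (1 / (d - c)) * S ^ 2
        = (1 / (d - c)) * (f y₀ * (d - c) - S) ^ 2 := by field_simp; ring
    have e3 : 0 ≤ (1 / (d - c)) * (f y₀ * (d - c) - S) ^ 2 := by positivity
    linarith
  -- final assembly
  rw [hSS, intervalIntegral.integral_of_le hcd.le, MeasureTheory.integral_Ioc_eq_integral_Ioo,
    intervalIntegral.integral_of_le hcd.le, MeasureTheory.integral_Ioc_eq_integral_Ioo]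
  simp only [sq_abs]
  have final : (1/2) * ∫ t in Set.Ioo c d, (t - c) * (d - t) * deriv f t ^ 2
      = ∫ t in Set.Ioo c d, (1/2) * ((t - c) * (d - t) * deriv f t ^ 2) := by
    rw [integral_const_mul]
  calc ∫ y in Set.Ioo c d, (f y - (1 / (d - c)) * S) ^ 2
      ≤ ∫ y in Set.Ioo c d, (f y - f y₀) ^ 2 := stepA
    _ = (∫ y in Set.Ioo c y₀, (f y - f y₀) ^ 2)
        + ∫ y in Set.Ioo y₀ d, (f y - f y₀) ^ 2 := split
    _ ≤ (∫ t in Set.Ioo c y₀, (1/2) * ((t - c) * (d - t) * deriv f t ^ 2))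
        + ∫ t in Set.Ioo y₀ d, (1/2) * ((t - c) * (d - t) * deriv f t ^ 2) := add_le_add half_l half_r
    _ = ∫ t in Set.Ioo c d, (1/2) * ((t - c) * (d - t) * deriv f t ^ 2) := join
    _ = (1/2) * ∫ t in Set.Ioo c d, (t - c) * (d - t) * deriv f t ^ 2 := final.symm
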